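/- Every map f ∈ C_λ is homotopic to the identity through Lebesgue measure-preserving maps: there exists a continuous map H : [0,1] → (C(I), ρ) with H(0) = f, H(1) = id_I, and H(t) ∈ C_λ for every t ∈ [0,1]. -/

import Mathlib

open Set Function Metric MeasureTheory

/-- The unit interval `[0,1]` with the Euclidean metric. -/
abbrev unitI : Type := Set.Icc (0:ℝ) 1

/-- `C_λ`: continuous surjective self-maps of `I` preserving Lebesgue measure,
i.e. `λ(f⁻¹(A)) = λ(A)` for every Borel set `A ⊆ I`. -/
def Clambda : Set C(unitI, unitI) :=
  {f | Function.Surjective ⇑f ∧ ∀ A : Set unitI, MeasurableSet A →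
    volume (((↑) '' (⇑f ⁻¹' A) : Set ℝ)) = volume (((↑) '' A : Set ℝ))}

noncomputable section CHomotopyAux

namespace CHomotopy

/-! ### clamp to [0,1] -/

def clamp (y : ℝ) : ℝ := max 0 (min 1 y)

lemma clamp_mem (y : ℝ) : clamp y ∈ Icc (0:ℝ) 1 :=
  ⟨le_max_left _ _, max_le zero_le_one (min_le_left _ _)⟩

lemma clamp_of_mem {y : ℝ} (hy : y ∈ Icc (0:ℝ) 1) : clamp y = y := by
  unfold clamp
  rw [min_eq_right hy.2, max_eq_right hy.1]

lemma clamp_of_nonpos {y : ℝ} (hy : y ≤ 0) : clamp y = 0 :=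
  max_eq_left (le_trans (min_le_right _ _) hy)

lemma continuous_clamp : Continuous clamp :=
  continuous_const.max (continuous_const.min continuous_id)

/-! ### the doubled tent map -/

def tentD (u : ℝ) : ℝ := 1 - abs (1 - |2*u - 2|)

lemma continuous_tentD : Continuous tentD := by
  unfold tentD; fun_prop

lemma tentD_mem {v : ℝ} (h0 : 0 ≤ v) (h2 : v ≤ 2) : tentD v ∈ Icc (0:ℝ) 1 := by
  unfold tentD
  have h1 : |2*v-2| ≤ 2 := abs_le.mpr ⟨by linarith, by linarith⟩
  have h3 : (0:ℝ) ≤ |2*v-2| := abs_nonneg _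
  have h4 : abs (1 - |2*v-2|) ≤ 1 := abs_le.mpr ⟨by linarith, by linarith⟩
  have h5 : (0:ℝ) ≤ abs (1 - |2*v-2|) := abs_nonneg _
  exact ⟨by linarith, by linarith⟩

lemma tentD_of_le_one {x : ℝ} (hx : x ≤ 1) : tentD x = 1 - |2*x - 1| := by
  unfold tentD
  rw [abs_of_nonpos (by linarith : 2*x-2 ≤ 0)]
  have h : 1 - -(2*x-2) = 2*x - 1 := by ring
  rw [h]

lemma tentD_zero : tentD 0 = 0 := by unfold tentD; norm_num

lemma tentD_one : tentD 1 = 0 := by unfold tentD; norm_num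

lemma tentD_period {u : ℝ} (h1 : 1 ≤ u) (h2 : u ≤ 2) : tentD u = tentD (u-1) := by
  unfold tentD
  rw [abs_of_nonneg (by linarith : (0:ℝ) ≤ 2*u-2),
     abs_of_nonpos (by linarith : 2*(u-1)-2 ≤ 0)]
  rw [show (1 - (2*u-2)) = -(2*u-3) by ring, abs_neg,
     show (1 - -(2*(u-1)-2)) = 2*u-3 by ring]

lemma tentD_half {y : ℝ} (h0 : 0 ≤ y) (h1 : y ≤ 1) : tentD (y/2) = y := by
  rw [tentD_of_le_one (by linarith), show 2*(y/2)-1 = -(1-y) by ring, abs_neg,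
    abs_of_nonneg (by linarith)]
  ring

lemma tentD_one_sub {y : ℝ} (h0 : 0 ≤ y) (h1 : y ≤ 1) : tentD (1 - y/2) = y := by
  unfold tentD
  rw [show 2*(1-y/2)-2 = -y by ring, abs_neg, abs_of_nonneg h0,
    abs_of_nonneg (by linarith : (0:ℝ) ≤ 1 - y)]
  ring

lemma tentD_one_add {y : ℝ} (h0 : 0 ≤ y) (h1 : y ≤ 1) : tentD (1 + y/2) = y := by
  unfold tentD
  rw [show 2*(1+y/2)-2 = y by ring, abs_of_nonneg h0,
    abs_of_nonneg (by linarith : (0:ℝ) ≤ 1 - y)]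
  ring

lemma tentD_memI : ∀ y ∈ Icc (0:ℝ) 1, tentD y ∈ Icc (0:ℝ) 1 :=
  fun y hy => tentD_mem hy.1 (by linarith [hy.2])

lemma tentD_surjI : ∀ y ∈ Icc (0:ℝ) 1, ∃ z ∈ Icc (0:ℝ) 1, tentD z = y :=
  fun y hy => ⟨y/2, ⟨by linarith [hy.1], by linarith [hy.2]⟩, tentD_half hy.1 hy.2⟩

/-! ### the real measure-preservation predicate -/

def RP (F : ℝ → ℝ) : Prop :=
  ∀ B : Set ℝ, MeasurableSet B → B ⊆ Icc 0 1 →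
    volume (Icc (0:ℝ) 1 ∩ F ⁻¹' B) = volume B

/-! ### volume helpers -/

lemma vol_affine {k : ℝ} (hk : k ≠ 0) (c : ℝ) (S : Set ℝ) :
    volume ((fun x => k*x + c) ⁻¹' S) = ENNReal.ofReal |k⁻¹| * volume S := by
  have h1 : (fun x : ℝ => k*x + c) ⁻¹' S = (fun x => k * x) ⁻¹' ((fun y => y + c) ⁻¹' S) := rfl
  rw [h1, Real.volume_preimage_mul_left hk, measure_preimage_add_right]

lemma vol_eq_of_subset_insert {A A' : Set ℝ} (p : ℝ) (h1 : A' ⊆ A) (h2 : A ⊆ A' ∪ {p}) :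
    volume A = volume A' := by
  refine le_antisymm ?_ (measure_mono h1)
  calc volume A ≤ volume (A' ∪ {p}) := measure_mono h2
    _ ≤ volume A' + volume ({p} : Set ℝ) := measure_union_le _ _
    _ = volume A' := by simp

/-! ### the tent map preserves measure -/

lemma RP_tentD : RP tentD := by
  intro B hB hBsub
  have key : Icc (0:ℝ) 1 ∩ tentD ⁻¹' B
      = ((fun x => 2*x) ⁻¹' B) ∪ ((fun x => (-2)*x + 2) ⁻¹' (B ∩ Iio 1)) := by
    ext x
    simp only [mem_inter_iff, mem_preimage, mem_union, mem_Icc, mem_Iio]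
    constructor
    · rintro ⟨⟨hx0, hx1⟩, hmem⟩
      rw [tentD_of_le_one hx1] at hmem
      by_cases h : 2*x ≤ 1
      · left
        rw [abs_of_nonpos (by linarith : 2*x-1 ≤ 0), show 1 - -(2*x-1) = 2*x by ring] at hmem
        exact hmem
      · right
        push_neg at h
        rw [abs_of_nonneg (by linarith : (0:ℝ) ≤ 2*x-1), show 1 - (2*x-1) = (-2)*x + 2 by ring]
          at hmem
        exact ⟨hmem, by linarith⟩
    · rintro (h | ⟨h, hlt⟩)
      · obtain ⟨hb0, hb1⟩ := hBsub h
        refine ⟨⟨by linarith, by linarith⟩, ?_⟩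
        rw [tentD_of_le_one (by linarith), abs_of_nonpos (by linarith : 2*x-1 ≤ 0),
          show 1 - -(2*x-1) = 2*x by ring]
        exact h
      · obtain ⟨hb0, hb1⟩ := hBsub h
        refine ⟨⟨by linarith, by linarith⟩, ?_⟩
        rw [tentD_of_le_one (by linarith), abs_of_nonneg (by linarith : (0:ℝ) ≤ 2*x-1),
          show 1 - (2*x-1) = (-2)*x + 2 by ring]
        exact h
  have hd : Disjoint ((fun x => 2*x) ⁻¹' B) ((fun x => (-2)*x + 2) ⁻¹' (B ∩ Iio 1)) := by
    rw [Set.disjoint_left]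
    intro x hx hx'
    have h1 : 2*x ≤ 1 := (hBsub hx).2
    have h2 : (-2)*x + 2 < 1 := hx'.2
    linarith
  have hm2 : MeasurableSet ((fun x => (-2)*x + 2) ⁻¹' (B ∩ Iio 1)) :=
    (hB.inter measurableSet_Iio).preimage (by fun_prop)
  have hBIio : volume (B ∩ Iio 1) = volume B := by
    refine (vol_eq_of_subset_insert 1 inter_subset_left ?_).symm
    intro b hb
    rcases lt_or_eq_of_le (hBsub hb).2 with h | h
    · exact Or.inl ⟨hb, h⟩
    · exact Or.inr (mem_singleton_iff.mpr h)
  rw [key, measure_union hd hm2, Real.volume_preimage_mul_left two_ne_zero,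
    vol_affine (by norm_num : ((-2):ℝ) ≠ 0) 2, hBIio]
  have ha1 : |((2:ℝ))⁻¹| = 1/2 := by rw [abs_of_pos (by norm_num : ((2:ℝ))⁻¹ > 0)]; norm_num
  have ha2 : |((-2:ℝ))⁻¹| = 1/2 := by
    rw [abs_of_neg (by norm_num : ((-2:ℝ))⁻¹ < 0)]; norm_num
  rw [ha1, ha2, ← add_mul, ← ENNReal.ofReal_add (by norm_num) (by norm_num)]
  norm_num

/-! ### composition preserves RP -/

lemma RP_comp {P Q : ℝ → ℝ} (hP : RP P) (hQ : RP Q) (hQm : Measurable Q)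
    (hPI : ∀ x ∈ Icc (0:ℝ) 1, P x ∈ Icc (0:ℝ) 1) : RP (fun x => Q (P x)) := by
  intro B hB hBsub
  have h1 : Icc (0:ℝ) 1 ∩ (fun x => Q (P x)) ⁻¹' B
      = Icc (0:ℝ) 1 ∩ P ⁻¹' (Icc (0:ℝ) 1 ∩ Q ⁻¹' B) := by
    ext x
    simp only [mem_inter_iff, mem_preimage]
    exact and_congr_right fun hx => (and_iff_right (hPI x hx)).symm
  rw [h1, hP _ (measurableSet_Icc.inter (hQm hB)) inter_subset_left, hQ B hB hBsub]

/-! ### the interval exchange preserves RP -/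

lemma RP_exchange {s : ℝ} (hs0 : 0 ≤ s) (hs1 : s ≤ 1) :
    RP (fun x => if x ≤ 1 - s then x + s else x + s - 1) := by
  intro B hB hBsub
  have key : Icc (0:ℝ) 1 ∩ (fun x => if x ≤ 1-s then x + s else x + s - 1) ⁻¹' B
      = ((fun x => x + s) ⁻¹' (B ∩ Icc s 1)) ∪ ((fun x => x + (s-1)) ⁻¹' (B ∩ Ioc 0 s)) := by
    ext x
    simp only [mem_inter_iff, mem_preimage, mem_union, mem_Icc, mem_Ioc]
    constructor
    · rintro ⟨⟨hx0, hx1⟩, hmem⟩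
      by_cases h : x ≤ 1 - s
      · rw [if_pos h] at hmem
        exact Or.inl ⟨hmem, by linarith, by linarith⟩
      · rw [if_neg h] at hmem
        push_neg at h
        right
        rw [show x + (s-1) = x + s - 1 by ring]
        exact ⟨hmem, by linarith, by linarith⟩
    · rintro (⟨hmem, hges, hle1⟩ | ⟨hmem, hgt0, hles⟩)
      · refine ⟨⟨by linarith, by linarith⟩, ?_⟩
        rw [if_pos (by linarith : x ≤ 1 - s)]
        exact hmem
      · rw [show x + (s-1) = x + s - 1 by ring] at hmem hgt0 hles
        refine ⟨⟨by linarith, by linarith⟩, ?_⟩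
        rw [if_neg (not_le.mpr (by linarith : 1 - s < x))]
        exact hmem
  have hd : Disjoint ((fun x => x + s) ⁻¹' (B ∩ Icc s 1))
      ((fun x => x + (s-1)) ⁻¹' (B ∩ Ioc 0 s)) := by
    rw [Set.disjoint_left]
    intro x hx hx'
    have h1 : x + s ≤ 1 := hx.2.2
    have h2 : 0 < x + (s-1) := hx'.2.1
    linarith
  have hm2 : MeasurableSet ((fun x => x + (s-1)) ⁻¹' (B ∩ Ioc 0 s)) :=
    (hB.inter measurableSet_Ioc).preimage (by fun_prop)
  rw [key, measure_union hd hm2, measure_preimage_add_right, measure_preimage_add_right]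
  have e1 : volume (B ∩ Icc s 1) = volume (B ∩ Ioc s 1) := by
    refine vol_eq_of_subset_insert s (inter_subset_inter_right _ Ioc_subset_Icc_self) ?_
    rintro x ⟨hxB, hxs, hx1⟩
    rcases eq_or_lt_of_le hxs with h | h
    · exact Or.inr (mem_singleton_iff.mpr h.symm)
    · exact Or.inl ⟨hxB, h, hx1⟩
  rw [e1]
  have hd2 : Disjoint (B ∩ Ioc s 1) (B ∩ Ioc 0 s) := by
    rw [Set.disjoint_left]
    intro x hx hx'
    exact absurd hx'.2.2 (not_le.mpr hx.2.1)
  rw [← measure_union hd2 (hB.inter measurableSet_Ioc)]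
  have hU : (B ∩ Ioc s 1) ∪ (B ∩ Ioc 0 s) = B ∩ Ioc 0 1 := by
    rw [union_comm, ← inter_union_distrib_left, Ioc_union_Ioc_eq_Ioc hs0 hs1]
  rw [hU]
  refine (vol_eq_of_subset_insert 0 inter_subset_left ?_).symm
  intro b hb
  rcases eq_or_lt_of_le (hBsub hb).1 with h | h
  · exact Or.inr (mem_singleton_iff.mpr h.symm)
  · exact Or.inl ⟨hb, h, (hBsub hb).2⟩

/-! ### the shifted tent maps preserve RP -/

lemma RP_shift {s : ℝ} (hs0 : 0 ≤ s) (hs1 : s ≤ 1) : RP (fun x => tentD (x + s)) := by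
  have hI : ∀ x ∈ Icc (0:ℝ) 1, (if x ≤ 1 - s then x + s else x + s - 1) ∈ Icc (0:ℝ) 1 := by
    intro x hx
    by_cases h : x ≤ 1 - s
    · rw [if_pos h]; exact ⟨by linarith [hx.1], by linarith⟩
    · rw [if_neg h]; push_neg at h
      exact ⟨by linarith, by linarith [hx.2]⟩
  have hcomp := RP_comp (RP_exchange hs0 hs1) RP_tentD continuous_tentD.measurable hI
  intro B hB hBsub
  rw [← hcomp B hB hBsub]
  have hset : Icc (0:ℝ) 1 ∩ (fun x => tentD (x + s)) ⁻¹' B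
      = Icc (0:ℝ) 1 ∩ (fun x => tentD (if x ≤ 1 - s then x + s else x + s - 1)) ⁻¹' B := by
    ext x
    simp only [mem_inter_iff, mem_preimage]
    refine and_congr_right fun hx => ?_
    by_cases h : x ≤ 1 - s
    · rw [if_pos h]
    · rw [if_neg h]; push_neg at h
      rw [tentD_period (by linarith) (by linarith [hx.2])]
  rw [hset]

/-! ### the corner construction -/

def corner (G : ℝ → ℝ) (u x : ℝ) : ℝ := min x u + (1-u) * G (clamp ((x-u)/(1-u)))

lemma corner_of_le {G : ℝ → ℝ} (hG0 : G 0 = 0) {u x : ℝ} (hxu : x ≤ u) (hu : u ≤ 1) :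
    corner G u x = x := by
  unfold corner
  have harg : (x - u)/(1 - u) ≤ 0 := by
    rcases eq_or_lt_of_le hu with h | h
    · rw [h]; simp
    · exact div_nonpos_of_nonpos_of_nonneg (by linarith) (by linarith)
  rw [clamp_of_nonpos harg, hG0, min_eq_left hxu]
  ring

lemma corner_of_ge {G : ℝ → ℝ} {u x : ℝ} (hu1 : u < 1) (hux : u ≤ x) (hx1 : x ≤ 1) :
    corner G u x = u + (1 - u) * G ((x - u)/(1 - u)) := by
  unfold corner
  rw [min_eq_right hux,
    clamp_of_mem ⟨div_nonneg (by linarith) (by linarith),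
      (div_le_one (by linarith)).mpr (by linarith)⟩]

lemma corner_one {G : ℝ → ℝ} (hG0 : G 0 = 0) {x : ℝ} (hx1 : x ≤ 1) : corner G 1 x = x :=
  corner_of_le hG0 hx1 le_rfl

lemma corner_zero {G : ℝ → ℝ} {z : ℝ} (hz : z ∈ Icc (0:ℝ) 1) : corner G 0 z = G z := by
  unfold corner
  rw [min_eq_right hz.1, show (z - 0)/(1 - 0) = z by norm_num, clamp_of_mem hz]
  ring

lemma corner_mem {G : ℝ → ℝ} (hGI : ∀ y ∈ Icc (0:ℝ) 1, G y ∈ Icc (0:ℝ) 1)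
    {u x : ℝ} (hu : u ∈ Icc (0:ℝ) 1) (hx : x ∈ Icc (0:ℝ) 1) : corner G u x ∈ Icc (0:ℝ) 1 := by
  unfold corner
  obtain ⟨hg0, hg1⟩ := hGI _ (clamp_mem ((x - u)/(1 - u)))
  obtain ⟨hu0, hu1⟩ := hu
  obtain ⟨hx0, hx1⟩ := hx
  constructor
  · have h := le_min hx0 hu0
    nlinarith
  · have h := min_le_right x u
    nlinarith

lemma corner_surj {G : ℝ → ℝ} (hG0 : G 0 = 0)
    (hGs : ∀ y ∈ Icc (0:ℝ) 1, ∃ x ∈ Icc (0:ℝ) 1, G x = y) {u : ℝ} (hu : u ∈ Icc (0:ℝ) 1) :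
    ∀ y ∈ Icc (0:ℝ) 1, ∃ x ∈ Icc (0:ℝ) 1, corner G u x = y := by
  intro y hy
  obtain ⟨hy1, hy2⟩ := hy
  by_cases hyu : y ≤ u
  · exact ⟨y, ⟨hy1, hy2⟩, corner_of_le hG0 hyu hu.2⟩
  · push_neg at hyu
    have hu1 : u < 1 := lt_of_lt_of_le hyu hy2
    have hne : (1:ℝ) - u ≠ 0 := by linarith
    have hz : (y - u)/(1-u) ∈ Icc (0:ℝ) 1 :=
      ⟨div_nonneg (by linarith) (by linarith), (div_le_one (by linarith)).mpr (by linarith)⟩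
    obtain ⟨w, hw, hGw⟩ := hGs _ hz
    refine ⟨u + (1-u)*w, ⟨by nlinarith [hw.1, hu.1], by nlinarith [hw.2]⟩, ?_⟩
    rw [corner_of_ge hu1 (by nlinarith [hw.1]) (by nlinarith [hw.2])]
    rw [show (u + (1-u)*w - u)/(1-u) = w by field_simp; ring, hGw]
    field_simp
    ring

lemma corner_cont_x {G : ℝ → ℝ} (hGc : Continuous G) (u : ℝ) : Continuous (corner G u) := by
  unfold corner
  exact (continuous_id.min continuous_const).add (continuous_const.mul
    (hGc.comp (continuous_clamp.comp ((continuous_id.sub continuous_const).div_const _))))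

lemma corner_cont {G : ℝ → ℝ} (hGc : Continuous G)
    (hGI : ∀ y ∈ Icc (0:ℝ) 1, G y ∈ Icc (0:ℝ) 1) :
    Continuous (fun p : ℝ × ℝ => corner G p.1 p.2) := by
  unfold corner
  have hbound : ∀ p : ℝ × ℝ, ‖(1 - p.1) * G (clamp ((p.2 - p.1)/(1 - p.1)))‖ ≤ |1 - p.1| := by
    intro p
    rw [Real.norm_eq_abs, abs_mul]
    have h := hGI _ (clamp_mem ((p.2 - p.1)/(1 - p.1)))
    have h2 : |G (clamp ((p.2 - p.1)/(1 - p.1)))| ≤ 1 := abs_le.mpr ⟨by linarith [h.1], h.2⟩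
    nlinarith [abs_nonneg (1 - p.1), abs_nonneg (G (clamp ((p.2 - p.1)/(1 - p.1))))]
  have hmin : Continuous fun p : ℝ × ℝ => min p.2 p.1 := continuous_snd.min continuous_fst
  have hh : Continuous fun p : ℝ × ℝ => (1 - p.1) * G (clamp ((p.2 - p.1)/(1 - p.1))) := by
    rw [continuous_iff_continuousAt]
    intro p₀
    by_cases h1 : p₀.1 = 1
    · have habs : Continuous fun p : ℝ × ℝ => |1 - p.1| :=
        (continuous_const.sub continuous_fst).abs
      have h2 := habs.tendsto p₀
      rw [show |1 - p₀.1| = 0 by rw [h1]; simp] at h2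
      have ht := squeeze_zero_norm hbound h2
      have heq : (fun p : ℝ × ℝ => (1 - p.1) * G (clamp ((p.2 - p.1)/(1 - p.1)))) p₀ = 0 := by
        simp only [h1]; ring
      unfold ContinuousAt
      rw [heq]
      exact ht
    · have hdiv : ContinuousAt (fun p : ℝ × ℝ => (p.2 - p.1)/(1 - p.1)) p₀ :=
        ContinuousAt.div ((continuous_snd.sub continuous_fst).continuousAt)
          ((continuous_const.sub continuous_fst).continuousAt)
          (sub_ne_zero.mpr (Ne.symm h1))
      exact ContinuousAt.mul ((continuous_const.sub continuous_fst).continuousAt)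
        ((hGc.continuousAt).comp ((continuous_clamp.continuousAt).comp hdiv))
  exact hmin.add hh

lemma RP_corner {G : ℝ → ℝ} (hG : RP G) (hGm : Measurable G) (hG0 : G 0 = 0)
    (hGI : ∀ y ∈ Icc (0:ℝ) 1, G y ∈ Icc (0:ℝ) 1) {u : ℝ} (hu0 : 0 ≤ u) (hu1 : u ≤ 1) :
    RP (corner G u) := by
  rcases eq_or_lt_of_le hu1 with rfl | hu1
  · intro B hB hBsub
    have h : Icc (0:ℝ) 1 ∩ corner G 1 ⁻¹' B = B := by
      ext x
      simp only [mem_inter_iff, mem_preimage]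
      constructor
      · rintro ⟨hx, hmem⟩
        rwa [corner_one hG0 hx.2] at hmem
      · intro hx
        have h' := hBsub hx
        exact ⟨h', by rwa [corner_one hG0 h'.2]⟩
    rw [h]
  · intro B hB hBsub
    have hkpos : 0 < 1 - u := by linarith
    set k := 1 - u with hk
    set C : Set ℝ := (fun y => k*y + u) ⁻¹' B ∩ Icc 0 1 with hC
    set S : Set ℝ := Icc (0:ℝ) 1 ∩ G ⁻¹' C with hS
    have heqt : ∀ x : ℝ, k⁻¹*x + (-u/k) = (x-u)/k := by
      intro x
      field_simp
      ring
    have key : Icc (0:ℝ) 1 ∩ corner G u ⁻¹' B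
        = (B ∩ Iic u) ∪ ((fun x => k⁻¹*x + (-u/k)) ⁻¹' (S ∩ Ioc 0 1)) := by
      ext x
      simp only [mem_inter_iff, mem_preimage, mem_union, mem_Iic, mem_Ioc, heqt x]
      constructor
      · rintro ⟨⟨hx0, hx1⟩, hmem⟩
        by_cases hxu : x ≤ u
        · rw [corner_of_le hG0 hxu (by linarith)] at hmem
          exact Or.inl ⟨hmem, hxu⟩
        · push_neg at hxu
          rw [corner_of_ge hu1 hxu.le hx1] at hmem
          right
          have hz1 : 0 < (x-u)/k := div_pos (by linarith) hkpos
          have hz2 : (x-u)/k ≤ 1 := (div_le_one hkpos).mpr (by linarith)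
          refine ⟨⟨⟨hz1.le, hz2⟩, ?_, ?_⟩, hz1, hz2⟩
          · show k * G ((x-u)/k) + u ∈ B
            rw [show k * G ((x-u)/k) + u = u + (1-u) * G ((x-u)/(1-u)) by rw [hk]; ring]
            exact hmem
          · exact hGI _ ⟨hz1.le, hz2⟩
      · rintro (⟨hmem, hxu⟩ | ⟨⟨hzI, hGC, hGI'⟩, hz1, hz2⟩)
        · have h' := hBsub hmem
          exact ⟨h', by rwa [corner_of_le hG0 hxu (by linarith)]⟩
        · have hxu : u < x := by
            have hprod : 0 < ((x-u)/k) * k := mul_pos hz1 hkpos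
            rw [div_mul_cancel₀ (x-u) (ne_of_gt hkpos)] at hprod
            linarith
          have hx1 : x ≤ 1 := by
            have := (div_le_one hkpos).mp hz2
            linarith [hk]
          refine ⟨⟨by linarith, hx1⟩, ?_⟩
          rw [corner_of_ge hu1 hxu.le hx1]
          rw [show u + (1-u) * G ((x-u)/(1-u)) = k * G ((x-u)/k) + u by rw [hk]; ring]
          exact hGC
    have hSm : MeasurableSet S := by
      rw [hS]
      exact measurableSet_Icc.inter (hGm ((hB.preimage (by fun_prop)).inter measurableSet_Icc))
    have hd : Disjoint (B ∩ Iic u) ((fun x => k⁻¹*x + (-u/k)) ⁻¹' (S ∩ Ioc 0 1)) := by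
      rw [Set.disjoint_left]
      intro x hx hx'
      have h1 : x ≤ u := hx.2
      have h2 : 0 < k⁻¹*x + (-u/k) := hx'.2.1
      rw [heqt x] at h2
      have := (div_pos_iff.mp h2)
      rcases this with ⟨ha, _⟩ | ⟨_, hb⟩
      · linarith
      · linarith
    have hm2 : MeasurableSet ((fun x => k⁻¹*x + (-u/k)) ⁻¹' (S ∩ Ioc 0 1)) :=
      (hSm.inter measurableSet_Ioc).preimage (by fun_prop)
    rw [key, measure_union hd hm2, vol_affine (inv_ne_zero (ne_of_gt hkpos)) _]
    have hSIoc : volume (S ∩ Ioc 0 1) = volume S := by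
      refine (vol_eq_of_subset_insert 0 inter_subset_left ?_).symm
      intro z hz
      have hzI : z ∈ Icc (0:ℝ) 1 := by rw [hS] at hz; exact hz.1
      rcases eq_or_lt_of_le hzI.1 with h | h
      · exact Or.inr (mem_singleton_iff.mpr h.symm)
      · exact Or.inl ⟨hz, h, hzI.2⟩
    have hvolS : volume S = volume C := hG C ((hB.preimage (by fun_prop)).inter measurableSet_Icc)
      inter_subset_right
    have hCrw : C = (fun y => k*y + u) ⁻¹' (B ∩ Icc u 1) := by
      rw [hC]
      ext y
      simp only [mem_inter_iff, mem_preimage, mem_Icc]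
      constructor
      · rintro ⟨hmem, hy0, hy1⟩
        refine ⟨hmem, by nlinarith, by nlinarith⟩
      · rintro ⟨hmem, hge, hle⟩
        refine ⟨hmem, by nlinarith, by nlinarith⟩
    have hvolC : volume C = ENNReal.ofReal k⁻¹ * volume (B ∩ Icc u 1) := by
      rw [hCrw, vol_affine (ne_of_gt hkpos) u]
      rw [abs_of_pos (inv_pos.mpr hkpos)]
    have hIcc : volume (B ∩ Icc u 1) = volume (B ∩ Ioi u) := by
      refine vol_eq_of_subset_insert u ?_ ?_
      · rintro x ⟨hxB, hxu⟩
        exact ⟨hxB, hxu.le, (hBsub hxB).2⟩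
      · rintro x ⟨hxB, hxu, hx1⟩
        rcases eq_or_lt_of_le hxu with h | h
        · exact Or.inr (mem_singleton_iff.mpr h.symm)
        · exact Or.inl ⟨hxB, h⟩
    rw [hSIoc, hvolS, hvolC, inv_inv, abs_of_pos hkpos, ← mul_assoc,
      ← ENNReal.ofReal_mul hkpos.le, mul_inv_cancel₀ (ne_of_gt hkpos), ENNReal.ofReal_one,
      one_mul, hIcc]
    have hd2 : Disjoint (B ∩ Iic u) (B ∩ Ioi u) := by
      rw [Set.disjoint_left]
      intro x hx hx'
      exact absurd (mem_Ioi.mp hx'.2) (not_lt.mpr hx.2)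
    rw [← measure_union hd2 (hB.inter measurableSet_Ioi), ← inter_union_distrib_left,
      Iic_union_Ioi, inter_univ]

/-! ### bridge to Clambda -/

lemma mem_Clambda_of (φ : C(unitI, unitI)) (F : ℝ → ℝ)
    (hφF : ∀ x : unitI, (φ x : ℝ) = F ↑x)
    (hsurj : ∀ y ∈ Icc (0:ℝ) 1, ∃ x ∈ Icc (0:ℝ) 1, F x = y)
    (hRP : RP F) : φ ∈ Clambda := by
  simp only [Clambda, Set.mem_setOf_eq]
  constructor
  · intro y
    obtain ⟨x, hx, hFx⟩ := hsurj ↑y y.2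
    exact ⟨⟨x, hx⟩, Subtype.ext (by rw [hφF]; exact hFx)⟩
  · intro A hA
    have hBm : MeasurableSet (Subtype.val '' A) := MeasurableSet.subtype_image measurableSet_Icc hA
    have hBsub : Subtype.val '' A ⊆ Icc (0:ℝ) 1 := by
      rintro y ⟨p, _, rfl⟩
      exact p.2
    have h1 : Subtype.val '' (⇑φ ⁻¹' A) = Icc (0:ℝ) 1 ∩ F ⁻¹' (Subtype.val '' A) := by
      ext x
      simp only [mem_image, mem_preimage, mem_inter_iff]
      constructor
      · rintro ⟨p, hp, rfl⟩
        exact ⟨p.2, ⟨φ p, hp, hφF p⟩⟩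
      · rintro ⟨hx, y', hy', hyx⟩
        refine ⟨⟨x, hx⟩, ?_, rfl⟩
        have hφ : φ ⟨x, hx⟩ = y' := Subtype.ext (by rw [hφF]; exact hyx.symm)
        rw [hφ]
        exact hy'
    rw [h1, hRP _ hBm hBsub]

end CHomotopy

end CHomotopyAux

open CHomotopy in
/-- Every `f ∈ C_λ` is homotopic to the identity through Lebesgue measure-preserving
maps: there is a continuous `H : [0,1] → (C(I), ρ)` with `H 0 = f`, `H 1 = id`, and
`H t ∈ C_λ` for all `t`. -/
theorem Clambda_homotopic_to_id (f : C(unitI, unitI)) (hf : f ∈ Clambda) :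
    ∃ H : unitI → C(unitI, unitI), Continuous H ∧
      H ⟨0, by norm_num⟩ = f ∧ H ⟨1, by norm_num⟩ = ContinuousMap.id unitI ∧
      ∀ t : unitI, H t ∈ Clambda := by
  simp only [Clambda, Set.mem_setOf_eq] at hf
  obtain ⟨hfs, hfm⟩ := hf
  set fr : ℝ → ℝ := fun x => ((f (projIcc 0 1 zero_le_one x) : ℝ)) with hfr
  have hfr_mem : ∀ x, fr x ∈ Icc (0:ℝ) 1 := fun x => (f _).2
  have hfr_cont : Continuous fr :=
    continuous_subtype_val.comp (f.continuous.comp continuous_projIcc)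
  have hfr_coe : ∀ x : unitI, fr ↑x = ↑(f x) := by
    intro x
    rw [hfr]
    simp only [projIcc_val]
  set a : ℝ := fr 0 with ha
  have ha_mem : a ∈ Icc (0:ℝ) 1 := hfr_mem 0
  -- composition with f preserves RP
  have RP_f : ∀ F : ℝ → ℝ, Measurable F → RP F → RP (fun x => F (fr x)) := by
    intro F hFm hF B hB hBsub
    set A : Set unitI := (fun p : unitI => F ↑p) ⁻¹' B with hA
    have hAm : MeasurableSet A := (hFm.comp measurable_subtype_coe) hB
    have h1 : Icc (0:ℝ) 1 ∩ (fun x => F (fr x)) ⁻¹' B = Subtype.val '' (⇑f ⁻¹' A) := by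
      ext x
      simp only [mem_inter_iff, mem_preimage, mem_image, hA]
      constructor
      · rintro ⟨hx, hmem⟩
        refine ⟨⟨x, hx⟩, ?_, rfl⟩
        have hcoe : fr x = ↑(f ⟨x, hx⟩) := hfr_coe ⟨x, hx⟩
        show F ↑(f ⟨x, hx⟩) ∈ B
        rwa [← hcoe]
      · rintro ⟨p, hp, rfl⟩
        exact ⟨p.2, by rwa [hfr_coe p]⟩
    have h2 : Subtype.val '' A = Icc (0:ℝ) 1 ∩ F ⁻¹' B := by
      ext y
      simp only [mem_image, mem_inter_iff, mem_preimage, hA]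
      constructor
      · rintro ⟨p, hp, rfl⟩
        exact ⟨p.2, hp⟩
      · rintro ⟨hy, hmem⟩
        exact ⟨⟨y, hy⟩, hmem, rfl⟩
    rw [h1, hfm A hAm, h2, hF B hB hBsub]
  -- composition with f preserves surjectivity
  have Surj_f : ∀ F : ℝ → ℝ, (∀ y ∈ Icc (0:ℝ) 1, ∃ z ∈ Icc (0:ℝ) 1, F z = y) →
      ∀ y ∈ Icc (0:ℝ) 1, ∃ x ∈ Icc (0:ℝ) 1, F (fr x) = y := by
    intro F hFs y hy
    obtain ⟨z, hz, hFz⟩ := hFs y hy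
    obtain ⟨p, hp⟩ := hfs ⟨z, hz⟩
    refine ⟨↑p, p.2, ?_⟩
    rw [hfr_coe p, hp]
    exact hFz
  -- surjectivity of shifted tents
  have surj_shift : ∀ s : ℝ, 0 ≤ s → s ≤ 1 →
      ∀ y ∈ Icc (0:ℝ) 1, ∃ z ∈ Icc (0:ℝ) 1, tentD (z + s) = y := by
    intro s hs0 hs1 y hy
    by_cases h : s ≤ 1/2
    · refine ⟨1 - y/2 - s, ⟨by linarith [hy.2], by linarith [hy.1]⟩, ?_⟩
      rw [show 1 - y/2 - s + s = 1 - y/2 by ring, tentD_one_sub hy.1 hy.2]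
    · push_neg at h
      refine ⟨1 + y/2 - s, ⟨by linarith [hy.1], by linarith [hy.2]⟩, ?_⟩
      rw [show 1 + y/2 - s + s = 1 + y/2 by ring, tentD_one_add hy.1 hy.2]
  -- the second-stage map g
  set g : ℝ → ℝ := fun z => tentD (fr z + (1 - a)) with hg
  have hg_cont : Continuous g := continuous_tentD.comp (hfr_cont.add continuous_const)
  have hg_mem : ∀ y ∈ Icc (0:ℝ) 1, g y ∈ Icc (0:ℝ) 1 := by
    intro y _
    exact tentD_mem (by linarith [(hfr_mem y).1, ha_mem.2]) (by linarith [(hfr_mem y).2, ha_mem.1])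
  have hg0 : g 0 = 0 := by
    rw [hg]
    simp only []
    rw [show fr 0 + (1 - a) = 1 by rw [← ha]; ring, tentD_one]
  have hg_surj : ∀ y ∈ Icc (0:ℝ) 1, ∃ z ∈ Icc (0:ℝ) 1, g z = y :=
    Surj_f (fun z => tentD (z + (1-a)))
      (surj_shift (1-a) (by linarith [ha_mem.2]) (by linarith [ha_mem.1]))
  have hg_RP : RP g :=
    RP_f (fun z => tentD (z + (1-a)))
      (continuous_tentD.comp (continuous_id.add continuous_const)).measurable
      (RP_shift (by linarith [ha_mem.2]) (by linarith [ha_mem.1]))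
  -- the big homotopy function
  set bigF : ℝ → ℝ → ℝ := fun t x =>
    if t ≤ 1/3 then corner tentD (1 - 3*t) (fr x)
    else if t ≤ 2/3 then tentD (fr x + (3*t - 1)*(1 - a))
    else corner g (3*t - 2) x with hbigF
  have hmem : ∀ t x : unitI, bigF ↑t ↑x ∈ Icc (0:ℝ) 1 := by
    intro t x
    obtain ⟨ht0, ht1⟩ := t.2
    obtain ⟨hx0, hx1⟩ := x.2
    simp only [hbigF]
    split_ifs with h1 h2
    · exact corner_mem tentD_memI ⟨by linarith, by linarith⟩ (hfr_mem _)
    · refine tentD_mem ?_ ?_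
      · have := (hfr_mem (↑x : ℝ)).1
        nlinarith [ha_mem.1, ha_mem.2]
      · have := (hfr_mem (↑x : ℝ)).2
        nlinarith [ha_mem.1, ha_mem.2]
    · push_neg at h1 h2
      exact corner_mem hg_mem ⟨by linarith, by linarith⟩ ⟨hx0, hx1⟩
  have hcont : Continuous fun q : unitI × unitI => bigF ↑q.1 ↑q.2 := by
    have hct : Continuous fun q : unitI × unitI => (↑q.1 : ℝ) :=
      continuous_subtype_val.comp continuous_fst
    have hcx : Continuous fun q : unitI × unitI => (↑q.2 : ℝ) :=
      continuous_subtype_val.comp continuous_snd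
    have hA : Continuous fun q : unitI × unitI => corner tentD (1 - 3*(↑q.1:ℝ)) (fr ↑q.2) :=
      (corner_cont continuous_tentD tentD_memI).comp
        ((continuous_const.sub (continuous_const.mul hct)).prodMk (hfr_cont.comp hcx))
    have hB : Continuous fun q : unitI × unitI =>
        tentD ((fr ↑q.2) + (3*(↑q.1:ℝ) - 1)*(1-a)) :=
      continuous_tentD.comp ((hfr_cont.comp hcx).add
        (((continuous_const.mul hct).sub continuous_const).mul continuous_const))
    have hC : Continuous fun q : unitI × unitI => corner g (3*(↑q.1:ℝ) - 2) ↑q.2 :=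
      (corner_cont hg_cont hg_mem).comp
        (((continuous_const.mul hct).sub continuous_const).prodMk hcx)
    simp only [hbigF]
    apply Continuous.if_le ?_ ?_ hct continuous_const ?_
    · exact hA
    · apply Continuous.if_le hB hC hct continuous_const ?_
      intro q hq
      rw [hq]
      rw [show ((3:ℝ)*(2/3) - 1)*(1-a) = 1-a by norm_num, show (3:ℝ)*(2/3) - 2 = 0 by norm_num,
        corner_zero q.2.2]
    · intro q hq
      rw [hq, if_pos (by norm_num : (1/3:ℝ) ≤ 2/3)]
      rw [show (1:ℝ) - 3*(1/3) = 0 by norm_num, show ((3:ℝ)*(1/3) - 1)*(1-a) = 0 by norm_num,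
        add_zero, corner_zero (hfr_mem _)]
  set bigC : C(unitI × unitI, unitI) :=
    ⟨fun q => ⟨bigF ↑q.1 ↑q.2, hmem q.1 q.2⟩, hcont.subtype_mk _⟩ with hbigC
  have hval : ∀ t x : unitI, ((((ContinuousMap.curry bigC) t) x : unitI) : ℝ) = bigF ↑t ↑x := by
    intro t x
    rw [ContinuousMap.curry_apply]
    rfl
  refine ⟨fun t => (ContinuousMap.curry bigC) t, (ContinuousMap.curry bigC).continuous, ?_, ?_, ?_⟩
  · -- H 0 = f
    apply ContinuousMap.ext
    intro x
    apply Subtype.ext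
    rw [hval]
    have h0 : ((⟨0, by norm_num⟩ : unitI) : ℝ) = 0 := rfl
    simp only [hbigF, h0]
    rw [if_pos (by norm_num : (0:ℝ) ≤ 1/3), show (1:ℝ) - 3*0 = 1 by norm_num,
      corner_one tentD_zero (hfr_mem _).2, hfr_coe x]
  · -- H 1 = id
    apply ContinuousMap.ext
    intro x
    apply Subtype.ext
    rw [hval]
    have h0 : ((⟨1, by norm_num⟩ : unitI) : ℝ) = 1 := rfl
    simp only [hbigF, h0]
    rw [if_neg (by norm_num : ¬((1:ℝ) ≤ 1/3)), if_neg (by norm_num : ¬((1:ℝ) ≤ 2/3)),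
      show (3:ℝ)*1 - 2 = 1 by norm_num, corner_one hg0 x.2.2]
    rfl
  · -- each H t is in Clambda
    intro t
    obtain ⟨ht0, ht1⟩ := t.2
    rcases le_or_gt (↑t : ℝ) (1/3) with h1 | h1
    · apply mem_Clambda_of _ (fun x => corner tentD (1 - 3*(↑t:ℝ)) (fr x))
      · intro x
        rw [hval]
        simp only [hbigF]
        rw [if_pos h1]
      · exact Surj_f _ (corner_surj tentD_zero tentD_surjI ⟨by linarith, by linarith⟩)
      · exact RP_f _ (corner_cont_x continuous_tentD _).measurable
          (RP_corner RP_tentD continuous_tentD.measurable tentD_zero tentD_memI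
            (by linarith) (by linarith))
    · rcases le_or_gt (↑t : ℝ) (2/3) with h2 | h2
      · have hs0 : 0 ≤ (3*(↑t:ℝ) - 1)*(1-a) :=
          mul_nonneg (by linarith) (by linarith [ha_mem.2])
        have hs1 : (3*(↑t:ℝ) - 1)*(1-a) ≤ 1 := by nlinarith [ha_mem.1, ha_mem.2]
        apply mem_Clambda_of _ (fun x => tentD (fr x + (3*(↑t:ℝ) - 1)*(1 - a)))
        · intro x
          rw [hval]
          simp only [hbigF]
          rw [if_neg (not_le.mpr h1), if_pos h2]
        · exact Surj_f (fun z => tentD (z + (3*(↑t:ℝ) - 1)*(1-a)))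
            (surj_shift _ hs0 hs1)
        · exact RP_f (fun z => tentD (z + (3*(↑t:ℝ) - 1)*(1-a)))
            (continuous_tentD.comp (continuous_id.add continuous_const)).measurable
            (RP_shift hs0 hs1)
      · apply mem_Clambda_of _ (corner g (3*(↑t:ℝ) - 2))
        · intro x
          rw [hval]
          simp only [hbigF]
          rw [if_neg (not_le.mpr h1), if_neg (not_le.mpr h2)]
        · exact corner_surj hg0 hg_surj ⟨by linarith, by linarith⟩
        · exact RP_corner hg_RP hg_cont.measurable hg0 hg_mem (by linarith) (by linarith)
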